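/- There exists a sequence of integers (d_n) with d₀ = 2·3·5 such that for all n ≥ 1: e^{d_{n-1}} ≤ d_n < e^{(4/3)·d_{n-1}}, and d_n / d_{n-1} is the product of all primes up to some integer m_n. -/

import Mathlib

open Finset

private lemma st15_bertrand (i : ℕ) : ∃ p, p.Prime ∧ 2 ^ i < p ∧ p ≤ 2 ^ (i + 1) := by
  obtain ⟨p, hp, h1, h2⟩ := Nat.exists_prime_lt_and_le_two_mul (2 ^ i) (pow_ne_zero i two_ne_zero)
  exact ⟨p, hp, h1, by rwa [pow_succ, mul_comm]⟩

private noncomputable def st15_p (i : ℕ) : ℕ := (st15_bertrand i).choose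

private lemma st15_p_prime (i : ℕ) : (st15_p i).Prime := (st15_bertrand i).choose_spec.1
private lemma st15_p_lt (i : ℕ) : 2 ^ i < st15_p i := (st15_bertrand i).choose_spec.2.1
private lemma st15_p_le (i : ℕ) : st15_p i ≤ 2 ^ (i + 1) := (st15_bertrand i).choose_spec.2.2

private lemma st15_p_mono : StrictMono st15_p := by
  apply strictMono_nat_of_lt_succ
  intro i
  calc st15_p i ≤ 2 ^ (i + 1) := st15_p_le i
    _ < st15_p (i + 1) := st15_p_lt (i + 1)

private lemma st15_prim_lb (j : ℕ) :
    2 ^ (∑ i ∈ range j, i) ≤ primorial (2 ^ j) := by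
  calc 2 ^ (∑ i ∈ range j, i) = ∏ i ∈ range j, 2 ^ i := by
        rw [Finset.prod_pow_eq_pow_sum]
    _ ≤ ∏ i ∈ range j, st15_p i :=
        Finset.prod_le_prod' fun i _ => (st15_p_lt i).le
    _ = ∏ q ∈ (range j).image st15_p, q := by
        rw [Finset.prod_image (fun a _ b _ h => st15_p_mono.injective h)]
    _ ≤ primorial (2 ^ j) := by
        apply Finset.prod_le_prod_of_subset_of_one_le'
        · intro q hq
          obtain ⟨i, hi, rfl⟩ := Finset.mem_image.mp hq
          rw [Finset.mem_filter, Finset.mem_range]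
          refine ⟨?_, st15_p_prime i⟩
          have : st15_p i ≤ 2 ^ j :=
            (st15_p_le i).trans (Nat.pow_le_pow_right (by norm_num) (Finset.mem_range.mp hi))
          omega
        · intro q hq _
          exact (Finset.mem_filter.mp hq).2.one_lt.le

private lemma st15_exists (d : ℕ) (hd : 1 ≤ d) :
    ∃ m, ⌈Real.exp d⌉₊ ≤ d * primorial m := by
  set n := ⌈Real.exp d⌉₊ with hn
  refine ⟨2 ^ (n + 1), ?_⟩
  have h1 : n ≤ ∑ i ∈ range (n + 1), i :=
    Finset.single_le_sum (f := fun i => i) (fun i _ => Nat.zero_le i) (self_mem_range_succ n)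
  have h2 : n ≤ 2 ^ (∑ i ∈ range (n + 1), i) :=
    le_trans (le_trans (Nat.le_of_lt (Nat.lt_two_pow_self (n := n))) (Nat.pow_le_pow_right (by norm_num) h1)) le_rfl
  calc n ≤ primorial (2 ^ (n + 1)) := h2.trans (st15_prim_lb (n + 1))
    _ ≤ d * primorial (2 ^ (n + 1)) := Nat.le_mul_of_pos_left _ hd

open Classical in
private noncomputable def st15_step (d : ℕ) : ℕ :=
  if h : ∃ m, ⌈Real.exp d⌉₊ ≤ d * primorial m then d * primorial (Nat.find h) else 0

open Classical in
private lemma st15_step_spec (d : ℕ) (hd : 30 ≤ d) :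
    Real.exp d ≤ (st15_step d : ℝ) ∧
    ((st15_step d : ℝ) < Real.exp ((4 / 3 : ℝ) * d)) ∧
    ∃ m, st15_step d = d * ∏ p ∈ Finset.filter Nat.Prime (Finset.range (m + 1)), p := by
  have h : ∃ m, ⌈Real.exp d⌉₊ ≤ d * primorial m := st15_exists d (by omega)
  rw [st15_step, dif_pos h]
  obtain ⟨m, hm⟩ : ∃ m, Nat.find h = m := ⟨_, rfl⟩
  rw [hm]
  have hspec : ⌈Real.exp d⌉₊ ≤ d * primorial m := hm ▸ Nat.find_spec h
  have hA : Real.exp d ≤ ((d * primorial m : ℕ) : ℝ) := by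
    calc Real.exp d ≤ (⌈Real.exp d⌉₊ : ℝ) := Nat.le_ceil _
      _ ≤ _ := by exact_mod_cast hspec
  -- upper bound setup
  set j := 2 * d / 5 with hj
  have h5 := Nat.div_add_mod (2 * d) 5
  have hm5 : (2 * d) % 5 < 5 := Nat.mod_lt _ (by norm_num)
  have hj1 : 5 * j ≤ 2 * d := by omega
  have hj2 : 2 * d ≤ 5 * j + 4 := by omega
  have hjge : 12 ≤ j := by omega
  obtain ⟨k, hk⟩ : ∃ k, j = k + 1 := ⟨j - 1, by omega⟩
  have hjj : 3 * d ≤ j * (j - 1) := by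
    rw [hk]
    simp only [Nat.add_sub_cancel]
    nlinarith [hj2, hjge]
  set S := ∑ i ∈ range j, i with hS
  have hS2 : S * 2 = j * (j - 1) := Finset.sum_range_id_mul_two j
  have hlog : (2 : ℝ) / 3 < Real.log 2 := by
    have := Real.log_two_gt_d9; linarith
  have hlog' : Real.log 2 < 0.7 := by
    have := Real.log_two_lt_d9; linarith
  have hdS : (d : ℝ) ≤ S * Real.log 2 := by
    have h1 : (3 * d : ℝ) ≤ S * 2 := by exact_mod_cast hS2 ▸ hjj
    nlinarith [hlog, h1]
  have h2S : ((2 : ℝ)) ^ S = Real.exp (S * Real.log 2) := by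
    rw [Real.exp_nat_mul, Real.exp_log (by norm_num : (0:ℝ) < 2)]
  have hexpS : Real.exp d ≤ (2 : ℝ) ^ S := by
    rw [h2S]; exact Real.exp_le_exp.mpr hdS
  have hPM : ⌈Real.exp d⌉₊ ≤ d * primorial (2 ^ j) := by
    rw [Nat.ceil_le]
    calc Real.exp d ≤ (2 : ℝ) ^ S := hexpS
      _ ≤ (primorial (2 ^ j) : ℝ) := by exact_mod_cast st15_prim_lb j
      _ ≤ ((d * primorial (2 ^ j) : ℕ) : ℝ) := by
          exact_mod_cast Nat.le_mul_of_pos_left _ (by omega : 0 < d)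
  have hmle : m ≤ 2 ^ j := hm ▸ Nat.find_min' h hPM
  have h2j : ((2 : ℝ)) ^ j ≤ Real.exp ((d : ℝ) / 3) := by
    rw [show ((2:ℝ)) ^ j = Real.exp (j * Real.log 2) by
      rw [Real.exp_nat_mul, Real.exp_log (by norm_num : (0:ℝ) < 2)]]
    apply Real.exp_le_exp.mpr
    have hjr : (5 : ℝ) * j ≤ 2 * d := by exact_mod_cast hj1
    nlinarith [hlog', hjr]
  have hexp43 : Real.exp ((4 / 3 : ℝ) * d) = Real.exp d * Real.exp ((d : ℝ) / 3) := by
    rw [← Real.exp_add]; ring_nf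
  have hB : ((d * primorial m : ℕ) : ℝ) < Real.exp ((4 / 3 : ℝ) * d) := by
    rcases Nat.eq_zero_or_pos m with hm0 | hmpos
    · rw [hm0]
      have : primorial 0 = 1 := rfl
      rw [this, mul_one]
      have h1 : (d : ℝ) + 1 ≤ Real.exp d := Real.add_one_le_exp d
      have h2 : Real.exp (d : ℝ) ≤ Real.exp ((4 / 3 : ℝ) * d) := by
        apply Real.exp_le_exp.mpr
        have : (0 : ℝ) ≤ d := Nat.cast_nonneg d
        linarith
      linarith
    · obtain ⟨k', rfl⟩ : ∃ k', m = k' + 1 := ⟨m - 1, by omega⟩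
      have hmin : ¬ (⌈Real.exp d⌉₊ ≤ d * primorial k') := Nat.find_min h (show k' < Nat.find h by omega)
      have hlt : ((d * primorial k' : ℕ) : ℝ) < Real.exp d := by
        rw [← Nat.lt_ceil]; omega
      have hprime : (k' + 1).Prime := by
        by_contra hnp
        have heq : primorial (k' + 1) = primorial k' := by
          unfold primorial
          rw [Finset.range_add_one (n := k' + 1), Finset.filter_insert, if_neg hnp]
        rw [heq] at hspec
        exact hmin hspec
      have hprim_succ : primorial (k' + 1) = (k' + 1) * primorial k' := by
        unfold primorial
        rw [Finset.range_add_one (n := k' + 1), Finset.filter_insert, if_pos hprime,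
          Finset.prod_insert (by simp)]
      have hk1 : ((k' + 1 : ℕ) : ℝ) ≤ Real.exp ((d : ℝ) / 3) := by
        calc ((k' + 1 : ℕ) : ℝ) ≤ ((2 ^ j : ℕ) : ℝ) := by exact_mod_cast hmle
          _ = (2 : ℝ) ^ j := by push_cast; ring
          _ ≤ _ := h2j
      have hval : ((d * primorial (k' + 1) : ℕ) : ℝ)
          = ((d * primorial k' : ℕ) : ℝ) * ((k' + 1 : ℕ) : ℝ) := by
        rw [hprim_succ]; push_cast; ring
      rw [hval, hexp43]
      apply mul_lt_mul hlt hk1 (by positivity) (Real.exp_pos _).le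
  exact ⟨hA, hB, m, by rw [primorial]⟩

/-- There is a sequence of integers `d` with `d 0 = 2·3·5 = 30`,
`e^(d n) ≤ d (n+1) < e^((4/3)·d n)`, and `d (n+1) / d n` a product of all primes up
to some integer `m`. -/
private noncomputable def st15_D : ℕ → ℕ
  | 0 => 30
  | n + 1 => st15_step (st15_D n)

private lemma st15_D_succ (n : ℕ) : st15_D (n + 1) = st15_step (st15_D n) := rfl

private lemma st15_D_ge (n : ℕ) : 30 ≤ st15_D n := by
  induction n with
  | zero => exact le_rfl
  | succ n ih =>
    have hs := (st15_step_spec (st15_D n) ih).1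
    have h1 : ((st15_D n : ℕ) : ℝ) + 1 ≤ Real.exp (st15_D n) := Real.add_one_le_exp _
    have h30 : (30 : ℝ) ≤ ((st15_D n : ℕ) : ℝ) := by exact_mod_cast ih
    have h : (30 : ℝ) ≤ ((st15_D (n + 1) : ℕ) : ℝ) := by rw [st15_D_succ]; linarith
    exact_mod_cast h

theorem stmt_15 : ∃ d : ℕ → ℕ, d 0 = 30 ∧ ∀ n : ℕ,
    Real.exp (d n) ≤ (d (n + 1) : ℝ) ∧
    ((d (n + 1) : ℝ) < Real.exp ((4 / 3 : ℝ) * (d n : ℝ))) ∧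
    ∃ m : ℕ, d (n + 1) = d n * ∏ p ∈ Finset.filter Nat.Prime (Finset.range (m + 1)), p := by
  refine ⟨st15_D, rfl, fun n => ?_⟩
  obtain ⟨hA, hB, m, hm⟩ := st15_step_spec (st15_D n) (st15_D_ge n)
  exact ⟨by rw [st15_D_succ]; exact hA, by rw [st15_D_succ]; exact hB, m,
    by rw [st15_D_succ]; exact hm⟩
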